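/- Let H be a complex Hilbert space and T : H →L[ℂ] H with ‖T‖ ≤ 1. Then there exist a complex Hilbert space K, a linear isometry J : H → K, and a unitary operator U : K →L[ℂ] K (i.e. U† ∘ U = 1 and U ∘ U† = 1) such that Tⁿ = J† ∘ Uⁿ ∘ J for every natural number n, and the closed linear span of { Uᵐ ((U†)ᵏ (J h)) : m, k ∈ ℕ, h ∈ H } equals K. -/

import Mathlib

open ContinuousLinearMap
open scoped InnerProductSpace
universe u
noncomputable section
namespace SzNagyProof
variable {H : Type u} [NormedAddCommGroup H] [InnerProductSpace ℂ H] [CompleteSpace H]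


/-- polynomial intertwining -/
lemma poly_intertwine (S A B : H →L[ℂ] H) (hSA : S * A = B * S) (p : Polynomial ℝ) :
    S * Polynomial.aeval A p = Polynomial.aeval B p * S := by
  induction p using Polynomial.induction_on' with
  | add p q hp hq => simp only [map_add, mul_add, add_mul, hp, hq]
  | monomial n a =>
    have hpow : S * A ^ n = B ^ n * S := by
      induction n with
      | zero => simp
      | succ n ih =>
        rw [pow_succ, pow_succ, ← mul_assoc, ih, mul_assoc, hSA, ← mul_assoc]
    simp only [Polynomial.aeval_monomial]
    calc S * (algebraMap ℝ (H →L[ℂ] H) a * A ^ n)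
        = algebraMap ℝ (H →L[ℂ] H) a * (S * A ^ n) := by
          rw [← mul_assoc, ← Algebra.commutes, mul_assoc]
      _ = algebraMap ℝ (H →L[ℂ] H) a * B ^ n * S := by rw [hpow, mul_assoc]

/-- continuous functions intertwine selfadjoint operators -/
lemma cfc_intertwine (S A B : H →L[ℂ] H) (hA : IsSelfAdjoint A) (hB : IsSelfAdjoint B)
    (hSA : S * A = B * S) (f : ℝ → ℝ) (hf : Continuous f) :
    S * cfc f A = cfc f B * S := by
  set X := S * cfc f A - cfc f B * S with hX
  have key : ∀ ε : ℝ, 0 < ε → ‖X‖ ≤ ε := by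
    intro ε hε
    set M : ℝ := max (‖A‖ * ‖(1 : H →L[ℂ] H)‖) (‖B‖ * ‖(1 : H →L[ℂ] H)‖) with hM
    set δ : ℝ := ε / (2 * ‖S‖ + 1) with hδ
    have hδpos : 0 < δ := by positivity
    obtain ⟨p, hp⟩ := exists_polynomial_near_of_continuousOn (-M) M f hf.continuousOn δ hδpos
    have hspecA : ∀ x ∈ spectrum ℝ A, x ∈ Set.Icc (-M) M := by
      intro x hx
      have := spectrum.norm_le_norm_mul_of_mem hx
      rw [Real.norm_eq_abs, abs_le] at this
      constructor
      · linarith [this.1, le_max_left (‖A‖ * ‖(1 : H →L[ℂ] H)‖) (‖B‖ * ‖(1 : H →L[ℂ] H)‖)]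
      · linarith [this.2, le_max_left (‖A‖ * ‖(1 : H →L[ℂ] H)‖) (‖B‖ * ‖(1 : H →L[ℂ] H)‖)]
    have hspecB : ∀ x ∈ spectrum ℝ B, x ∈ Set.Icc (-M) M := by
      intro x hx
      have := spectrum.norm_le_norm_mul_of_mem hx
      rw [Real.norm_eq_abs, abs_le] at this
      constructor
      · linarith [this.1, le_max_right (‖A‖ * ‖(1 : H →L[ℂ] H)‖) (‖B‖ * ‖(1 : H →L[ℂ] H)‖)]
      · linarith [this.2, le_max_right (‖A‖ * ‖(1 : H →L[ℂ] H)‖) (‖B‖ * ‖(1 : H →L[ℂ] H)‖)]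
    have hnormA : ‖cfc f A - cfc p.eval A‖ ≤ δ := by
      rw [← cfc_sub f p.eval A hf.continuousOn (Polynomial.continuous p).continuousOn]
      refine norm_cfc_le hδpos.le fun x hx => ?_
      rw [Real.norm_eq_abs, abs_sub_comm]
      exact (hp x (hspecA x hx)).le
    have hnormB : ‖cfc f B - cfc p.eval B‖ ≤ δ := by
      rw [← cfc_sub f p.eval B hf.continuousOn (Polynomial.continuous p).continuousOn]
      refine norm_cfc_le hδpos.le fun x hx => ?_
      rw [Real.norm_eq_abs, abs_sub_comm]
      exact (hp x (hspecB x hx)).le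
    have hmid : S * cfc p.eval A = cfc p.eval B * S := by
      rw [cfc_polynomial p A, cfc_polynomial p B]
      exact poly_intertwine S A B hSA p
    have hXeq : X = S * (cfc f A - cfc p.eval A) - (cfc f B - cfc p.eval B) * S := by
      rw [hX, mul_sub, sub_mul, hmid]; abel
    calc ‖X‖ ≤ ‖S * (cfc f A - cfc p.eval A)‖ + ‖(cfc f B - cfc p.eval B) * S‖ := by
          rw [hXeq]; exact norm_sub_le _ _
      _ ≤ ‖S‖ * δ + δ * ‖S‖ := by
          gcongr
          · exact (norm_mul_le _ _).trans (by gcongr)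
          · exact (norm_mul_le _ _).trans (by gcongr)
      _ = δ * (2 * ‖S‖) := by ring
      _ ≤ ε := by
          rw [hδ, div_mul_eq_mul_div, div_le_iff₀ (by positivity)]
          nlinarith [norm_nonneg S, hε.le]
  have : ‖X‖ ≤ 0 := le_of_forall_pos_le_add (by intro ε hε; simpa using key ε hε)
  have hX0 : X = 0 := norm_le_zero_iff.mp this
  rw [hX] at hX0
  exact sub_eq_zero.mp hX0


/-- The defect operator `√(1 - T†T)`. -/
def dOp (T : H →L[ℂ] H) : H →L[ℂ] H := cfc Real.sqrt (1 - adjoint T * T)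

lemma defect_sa (T : H →L[ℂ] H) : IsSelfAdjoint (1 - adjoint T * T) := by
  have h1 : IsSelfAdjoint (1 : H →L[ℂ] H) := IsSelfAdjoint.one _
  have h2 : IsSelfAdjoint (adjoint T * T) := by
    rw [IsSelfAdjoint, star_mul, star_eq_adjoint, star_eq_adjoint, adjoint_adjoint]
  exact h1.sub h2

lemma defect_nonneg (T : H →L[ℂ] H) (hT : ‖T‖ ≤ 1) : 0 ≤ 1 - adjoint T * T := by
  rw [nonneg_iff_isPositive]
  refine ⟨(defect_sa T).isSymmetric, fun x => ?_⟩
  have : ((1 : H →L[ℂ] H) - adjoint T * T) x = x - adjoint T (T x) := rfl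
  rw [reApplyInnerSelf_apply, this, inner_sub_left, adjoint_inner_left, map_sub]
  have hTx : ‖T x‖ ≤ ‖x‖ := by
    calc ‖T x‖ ≤ ‖T‖ * ‖x‖ := T.le_opNorm x
      _ ≤ 1 * ‖x‖ := by gcongr
      _ = ‖x‖ := one_mul _
  have h1 : RCLike.re (⟪x, x⟫_ℂ) = ‖x‖ ^ 2 := by
    rw [inner_self_eq_norm_sq (𝕜 := ℂ) x]
  have h2 : RCLike.re (⟪T x, T x⟫_ℂ) = ‖T x‖ ^ 2 := by
    rw [inner_self_eq_norm_sq (𝕜 := ℂ) (T x)]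
  rw [h1, h2]
  nlinarith [norm_nonneg (T x), norm_nonneg x]

lemma dOp_sa (T : H →L[ℂ] H) : IsSelfAdjoint (dOp T) := cfc_predicate _ _

lemma dOp_sq (T : H →L[ℂ] H) (hT : ‖T‖ ≤ 1) :
    dOp T * dOp T = 1 - adjoint T * T := by
  have h := defect_nonneg T hT
  rw [dOp, ← cfc_mul _ _ _ Real.continuous_sqrt.continuousOn Real.continuous_sqrt.continuousOn,
    cfc_congr (g := fun x : ℝ => x) (fun x hx => Real.mul_self_sqrt
    (spectrum_nonneg_of_nonneg h hx))]
  exact cfc_id ℝ _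

lemma dOp_intertwine (T : H →L[ℂ] H) : T * dOp T = dOp (adjoint T) * T := by
  have key : T * (1 - adjoint T * T) = (1 - adjoint (adjoint T) * adjoint T) * T := by
    rw [adjoint_adjoint]; noncomm_ring
  exact cfc_intertwine T _ _ (defect_sa T) (defect_sa (adjoint T)) key
    Real.sqrt Real.continuous_sqrt

lemma dOp_intertwine' (T : H →L[ℂ] H) :
    dOp T * adjoint T = adjoint T * dOp (adjoint T) := by
  have := congrArg star (dOp_intertwine T)
  rwa [star_mul, star_mul, star_eq_adjoint, star_eq_adjoint, star_eq_adjoint,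
    (dOp_sa T).adjoint_eq, (dOp_sa (adjoint T)).adjoint_eq] at this

/-! ### lp groundwork -/

section lpStuff
set_option linter.unusedSectionVars false

/-- coordinate evaluation as a continuous linear map -/
def ev (i : ℤ) : lp (fun _ : ℤ => H) 2 →L[ℂ] H :=
  LinearMap.mkContinuous
    { toFun := fun x => x i
      map_add' := fun x y => by
        have := lp.coeFn_add x y
        simpa using congrFun this i
      map_smul' := fun c x => by
        have := lp.coeFn_smul c x
        simpa using congrFun this i }
    1 (fun x => by
        show ‖x i‖ ≤ 1 * ‖x‖
        simpa using lp.norm_apply_le_norm (by norm_num : (2 : ENNReal) ≠ 0) x i)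

@[simp] lemma ev_apply (i : ℤ) (x : lp (fun _ : ℤ => H) 2) : ev i x = x i := rfl

lemma single_inner_self (i : ℤ) (a : H) :
    ⟪(lp.single 2 i a : lp (fun _ : ℤ => H) 2), lp.single 2 i a⟫_ℂ = ⟪a, a⟫_ℂ := by
  rw [lp.inner_single_left, lp.single_apply_self]

lemma norm_eq_of_inner_self_eq {E F : Type*} [NormedAddCommGroup E] [InnerProductSpace ℂ E]
    [NormedAddCommGroup F] [InnerProductSpace ℂ F] {x : E} {y : F}
    (h : ⟪x, x⟫_ℂ = ⟪y, y⟫_ℂ) : ‖x‖ = ‖y‖ := by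
  have hx : ‖x‖ ^ 2 = ‖y‖ ^ 2 := by
    have h1 := inner_self_eq_norm_sq (𝕜 := ℂ) x
    have h2 := inner_self_eq_norm_sq (𝕜 := ℂ) y
    rw [← h1, ← h2, h]
  calc ‖x‖ = Real.sqrt (‖x‖ ^ 2) := (Real.sqrt_sq (norm_nonneg x)).symm
    _ = Real.sqrt (‖y‖ ^ 2) := by rw [hx]
    _ = ‖y‖ := Real.sqrt_sq (norm_nonneg y)

lemma norm_single (i : ℤ) (a : H) :
    ‖(lp.single 2 i a : lp (fun _ : ℤ => H) 2)‖ = ‖a‖ :=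
  norm_eq_of_inner_self_eq (single_inner_self i a)

/-- `lp.single` as a continuous linear map -/
def sing (i : ℤ) : H →L[ℂ] lp (fun _ : ℤ => H) 2 :=
  LinearMap.mkContinuous
    { toFun := fun a => lp.single 2 i a
      map_add' := fun a b => by
        ext j
        rcases eq_or_ne j i with rfl | hj
        · rw [lp.coeFn_add]
          simp [lp.single_apply_self]
        · rw [lp.coeFn_add]
          simp [lp.single_apply_ne _ _ _ hj]
      map_smul' := fun c a => by simp [lp.single_smul] }
    1 (fun a => by simp [norm_single])

@[simp] lemma sing_apply (i : ℤ) (a : H) : sing i a = lp.single 2 i a := rfl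

@[simp] lemma sing_coord_self (i : ℤ) (a : H) : (sing i a : lp (fun _ : ℤ => H) 2) i = a :=
  lp.single_apply_self _ _ _

lemma sing_coord_ne (i : ℤ) (a : H) {j : ℤ} (hj : j ≠ i) :
    (sing i a : lp (fun _ : ℤ => H) 2) j = 0 :=
  lp.single_apply_ne _ _ _ hj

/-! ### the bilateral shift -/

lemma memℓp_shift (f : lp (fun _ : ℤ => H) 2) : Memℓp (fun n : ℤ => f (n - 1)) 2 := by
  apply memℓp_gen
  have h := (lp.hasSum_norm (by norm_num : 0 < (2 : ENNReal).toReal) f).summable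
  exact ((Equiv.subRight (1 : ℤ)).summable_iff
    (f := fun i => ‖f i‖ ^ (2 : ENNReal).toReal)).mpr h

lemma memℓp_unshift (f : lp (fun _ : ℤ => H) 2) : Memℓp (fun n : ℤ => f (n + 1)) 2 := by
  apply memℓp_gen
  have h := (lp.hasSum_norm (by norm_num : 0 < (2 : ENNReal).toReal) f).summable
  exact ((Equiv.addRight (1 : ℤ)).summable_iff
    (f := fun i => ‖f i‖ ^ (2 : ENNReal).toReal)).mpr h

/-- the bilateral right shift as a linear isometry equivalence -/
def shiftIso : lp (fun _ : ℤ => H) 2 ≃ₗᵢ[ℂ] lp (fun _ : ℤ => H) 2 where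
  toLinearEquiv :=
    { toFun := fun f => ⟨fun n => f (n - 1), memℓp_shift f⟩
      invFun := fun f => ⟨fun n => f (n + 1), memℓp_unshift f⟩
      map_add' := fun f g => by
        ext n
        exact (congrFun (lp.coeFn_add f g) (n - 1)).trans (congrFun (lp.coeFn_add (⟨fun n => f (n - 1), memℓp_shift f⟩ : lp (fun _ : ℤ => H) 2)
          ⟨fun n => g (n - 1), memℓp_shift g⟩) n).symm
      map_smul' := fun c f => by
        ext n
        exact (congrFun (lp.coeFn_smul c f) (n - 1)).trans (congrFun (lp.coeFn_smul c
          (⟨fun n => f (n - 1), memℓp_shift f⟩ : lp (fun _ : ℤ => H) 2)) n).symm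
      left_inv := fun f => by ext n; simp
      right_inv := fun f => by ext n; simp }
  norm_map' := fun f => by
    apply norm_eq_of_inner_self_eq
    rw [lp.inner_eq_tsum, lp.inner_eq_tsum]
    exact (Equiv.subRight (1 : ℤ)).tsum_eq (fun n => ⟪f n, f n⟫_ℂ)

@[simp] lemma shiftIso_apply (f : lp (fun _ : ℤ => H) 2) (n : ℤ) :
    (shiftIso f : lp (fun _ : ℤ => H) 2) n = f (n - 1) := rfl

end lpStuff

/-! ### the Schäffer block rotation -/

section Block
set_option linter.unusedSectionVars false
variable {H : Type u} [NormedAddCommGroup H] [InnerProductSpace ℂ H] [CompleteSpace H]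

local notation "K₀" => lp (fun _ : ℤ => H) 2

lemma lp_add_coord (f g : K₀) (n : ℤ) : ((f + g : K₀) : ∀ _ : ℤ, H) n = f n + g n := by
  rw [lp.coeFn_add]; rfl

/-- the Schäffer unitary `2×2` block, acting on coordinates `-1, 0` -/
def Bfwd (T : H →L[ℂ] H) : K₀ →L[ℂ] K₀ :=
  1 + sing (-1) ∘L ((dOp (adjoint T) - 1) ∘L ev (-1) + T ∘L ev 0)
    + sing 0 ∘L ((dOp T - 1) ∘L ev 0 - adjoint T ∘L ev (-1))

/-- the inverse block -/
def Binv (T : H →L[ℂ] H) : K₀ →L[ℂ] K₀ :=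
  1 + sing (-1) ∘L ((dOp (adjoint T) - 1) ∘L ev (-1) - T ∘L ev 0)
    + sing 0 ∘L ((dOp T - 1) ∘L ev 0 + adjoint T ∘L ev (-1))

lemma Bfwd_eq (T : H →L[ℂ] H) (x : K₀) :
    Bfwd T x = x + sing (-1) (dOp (adjoint T) (x (-1)) - x (-1) + T (x 0))
      + sing 0 (dOp T (x 0) - x 0 - adjoint T (x (-1))) := rfl

lemma Binv_eq (T : H →L[ℂ] H) (x : K₀) :
    Binv T x = x + sing (-1) (dOp (adjoint T) (x (-1)) - x (-1) - T (x 0))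
      + sing 0 (dOp T (x 0) - x 0 + adjoint T (x (-1))) := rfl

lemma Bfwd_coord_other (T : H →L[ℂ] H) (x : K₀) {n : ℤ} (h1 : n ≠ -1) (h0 : n ≠ 0) :
    (Bfwd T x : ∀ _ : ℤ, H) n = x n := by
  rw [Bfwd_eq, lp_add_coord, lp_add_coord, sing_coord_ne _ _ h1, sing_coord_ne _ _ h0]
  abel

lemma Bfwd_coord_neg_one (T : H →L[ℂ] H) (x : K₀) :
    (Bfwd T x : ∀ _ : ℤ, H) (-1) = dOp (adjoint T) (x (-1)) + T (x 0) := by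
  rw [Bfwd_eq, lp_add_coord, lp_add_coord, sing_coord_self,
    sing_coord_ne _ _ (by decide : (-1 : ℤ) ≠ 0)]
  abel

lemma Bfwd_coord_zero (T : H →L[ℂ] H) (x : K₀) :
    (Bfwd T x : ∀ _ : ℤ, H) 0 = dOp T (x 0) - adjoint T (x (-1)) := by
  rw [Bfwd_eq, lp_add_coord, lp_add_coord, sing_coord_self,
    sing_coord_ne _ _ (by decide : (0 : ℤ) ≠ -1)]
  abel

lemma Binv_coord_other (T : H →L[ℂ] H) (x : K₀) {n : ℤ} (h1 : n ≠ -1) (h0 : n ≠ 0) :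
    (Binv T x : ∀ _ : ℤ, H) n = x n := by
  rw [Binv_eq, lp_add_coord, lp_add_coord, sing_coord_ne _ _ h1, sing_coord_ne _ _ h0]
  abel

lemma Binv_coord_neg_one (T : H →L[ℂ] H) (x : K₀) :
    (Binv T x : ∀ _ : ℤ, H) (-1) = dOp (adjoint T) (x (-1)) - T (x 0) := by
  rw [Binv_eq, lp_add_coord, lp_add_coord, sing_coord_self,
    sing_coord_ne _ _ (by decide : (-1 : ℤ) ≠ 0)]
  abel

lemma Binv_coord_zero (T : H →L[ℂ] H) (x : K₀) :
    (Binv T x : ∀ _ : ℤ, H) 0 = dOp T (x 0) + adjoint T (x (-1)) := by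
  rw [Binv_eq, lp_add_coord, lp_add_coord, sing_coord_self,
    sing_coord_ne _ _ (by decide : (0 : ℤ) ≠ -1)]
  abel

section withT
variable {T : H →L[ℂ] H}

lemma normAdj (hT : ‖T‖ ≤ 1) : ‖adjoint T‖ ≤ 1 := by
  calc ‖adjoint T‖ = ‖T‖ := (ContinuousLinearMap.adjoint (E := H) (F := H)).norm_map T
    _ ≤ 1 := hT

lemma hE2 (hT : ‖T‖ ≤ 1) : ∀ a : H, dOp (adjoint T) (dOp (adjoint T) a) + T (adjoint T a) = a := by
  intro a
  have h := dOp_sq (adjoint T) (normAdj hT)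
  rw [adjoint_adjoint] at h
  have h2 := congrArg (fun S : H →L[ℂ] H => S a) h
  simp only [mul_apply_eq_comp, sub_apply, one_apply_eq_self] at h2
  rw [h2]
  abel

lemma hD2 (hT : ‖T‖ ≤ 1) : ∀ b : H, dOp T (dOp T b) + adjoint T (T b) = b := by
  intro b
  have h2 := congrArg (fun S : H →L[ℂ] H => S b) (dOp_sq T hT)
  simp only [mul_apply_eq_comp, sub_apply, one_apply_eq_self] at h2
  rw [h2]
  abel

lemma hCross : ∀ b : H, dOp (adjoint T) (T b) = T (dOp T b) := by
  intro b
  have h2 := congrArg (fun S : H →L[ℂ] H => S b) (dOp_intertwine T)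
  simpa only [mul_apply_eq_comp] using h2.symm

lemma hCross' : ∀ a : H, dOp T (adjoint T a) = adjoint T (dOp (adjoint T) a) := by
  intro a
  have h2 := congrArg (fun S : H →L[ℂ] H => S a) (dOp_intertwine' T)
  simpa only [mul_apply_eq_comp] using h2

lemma Binv_Bfwd (hT : ‖T‖ ≤ 1) (x : K₀) : Binv T (Bfwd T x) = x := by
  ext n
  rcases eq_or_ne n (-1) with rfl | h1
  · rw [Binv_coord_neg_one, Bfwd_coord_neg_one, Bfwd_coord_zero, map_add, map_sub, hCross]
    have := hE2 hT (x (-1))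
    linear_combination (norm := abel) this
  rcases eq_or_ne n 0 with rfl | h0
  · rw [Binv_coord_zero, Bfwd_coord_neg_one, Bfwd_coord_zero, map_add, map_sub, hCross']
    have := hD2 hT (x 0)
    linear_combination (norm := abel) this
  · rw [Binv_coord_other _ _ h1 h0, Bfwd_coord_other _ _ h1 h0]

lemma Bfwd_Binv (hT : ‖T‖ ≤ 1) (x : K₀) : Bfwd T (Binv T x) = x := by
  ext n
  rcases eq_or_ne n (-1) with rfl | h1
  · rw [Bfwd_coord_neg_one, Binv_coord_neg_one, Binv_coord_zero, map_add, map_sub, hCross]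
    have := hE2 hT (x (-1))
    linear_combination (norm := abel) this
  rcases eq_or_ne n 0 with rfl | h0
  · rw [Bfwd_coord_zero, Binv_coord_neg_one, Binv_coord_zero, map_add, map_sub, hCross']
    have := hD2 hT (x 0)
    linear_combination (norm := abel) this
  · rw [Bfwd_coord_other _ _ h1 h0, Binv_coord_other _ _ h1 h0]

end withT
end Block

/-! ### the unitary on `ℓ²(ℤ, H)` -/

section Unitary
set_option linter.unusedSectionVars false
variable {H : Type u} [NormedAddCommGroup H] [InnerProductSpace ℂ H] [CompleteSpace H]

local notation "K₀" => lp (fun _ : ℤ => H) 2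

lemma hasSum_eq_two_point {f g : ℤ → ℂ} {a b : ℂ} (hf : HasSum f a) (hg : HasSum g b)
    (hee : ∀ n : ℤ, n ≠ -1 → n ≠ 0 → f n = g n) (hs : f (-1) + f 0 = g (-1) + g 0) :
    a = b := by
  have hsupp : ∀ n ∉ ({-1, 0} : Finset ℤ), (f - g) n = 0 := by
    intro n hn
    simp only [Finset.mem_insert, Finset.mem_singleton] at hn
    push_neg at hn
    simp [Pi.sub_apply, hee n hn.1 hn.2]
  have h2 : HasSum (f - g) (∑ n ∈ ({-1, 0} : Finset ℤ), (f - g) n) :=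
    hasSum_sum_of_ne_finset_zero hsupp
  have h3 := (hf.sub hg).unique h2
  rw [Finset.sum_pair (by decide : (-1 : ℤ) ≠ 0)] at h3
  have h4 : (f (-1) - g (-1)) + (f 0 - g 0) = 0 := by linear_combination hs
  simp only [Pi.sub_apply] at h3
  rw [h4] at h3
  exact sub_eq_zero.mp h3

variable {T : H →L[ℂ] H}

lemma vecid (hT : ‖T‖ ≤ 1) (a b : H) :
    ⟪dOp (adjoint T) a + T b, dOp (adjoint T) a + T b⟫_ℂ
      + ⟪dOp T b - adjoint T a, dOp T b - adjoint T a⟫_ℂ = ⟪a, a⟫_ℂ + ⟪b, b⟫_ℂ := by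
  have eE : ∀ u v : H, ⟪dOp (adjoint T) u, v⟫_ℂ = ⟪u, dOp (adjoint T) v⟫_ℂ := fun u v => by
    conv_lhs => rw [← (dOp_sa (adjoint T)).adjoint_eq]
    exact adjoint_inner_left _ _ _
  have eD : ∀ u v : H, ⟪dOp T u, v⟫_ℂ = ⟪u, dOp T v⟫_ℂ := fun u v => by
    conv_lhs => rw [← (dOp_sa T).adjoint_eq]
    exact adjoint_inner_left _ _ _
  have eTa : ∀ u v : H, ⟪adjoint T u, v⟫_ℂ = ⟪u, T v⟫_ℂ := fun u v =>
    adjoint_inner_left _ _ _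
  have eT : ∀ u v : H, ⟪T u, v⟫_ℂ = ⟪u, adjoint T v⟫_ℂ := fun u v =>
    (adjoint_inner_right _ _ _).symm
  simp only [inner_add_left, inner_add_right, inner_sub_left, inner_sub_right]
  rw [eE a (dOp (adjoint T) a), eE a (T b), eT b (dOp (adjoint T) a), eT b (T b),
    eD b (dOp T b), eD b (adjoint T a), eTa a (dOp T b), eTa a (adjoint T a),
    hCross b, ← hCross' a]
  have h1 : ⟪a, dOp (adjoint T) (dOp (adjoint T) a)⟫_ℂ + ⟪a, T (adjoint T a)⟫_ℂ
      = ⟪a, a⟫_ℂ := by rw [← inner_add_right, hE2 hT a]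
  have h2 : ⟪b, dOp T (dOp T b)⟫_ℂ + ⟪b, adjoint T (T b)⟫_ℂ = ⟪b, b⟫_ℂ := by
    rw [← inner_add_right, hD2 hT b]
  linear_combination h1 + h2

lemma Bfwd_inner_self (hT : ‖T‖ ≤ 1) (x : K₀) :
    ⟪Bfwd T x, Bfwd T x⟫_ℂ = ⟪x, x⟫_ℂ := by
  refine hasSum_eq_two_point (lp.hasSum_inner (Bfwd T x) (Bfwd T x))
    (lp.hasSum_inner x x) (fun n h1 h0 => ?_) ?_
  · rw [Bfwd_coord_other T x h1 h0]
  · rw [Bfwd_coord_neg_one, Bfwd_coord_zero]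
    exact vecid hT (x (-1)) (x 0)

/-- the Schäffer block as an isometric isomorphism -/
def BIso (hT : ‖T‖ ≤ 1) : K₀ ≃ₗᵢ[ℂ] K₀ where
  toLinearEquiv :=
    { toFun := Bfwd T
      map_add' := map_add _
      map_smul' := map_smul _
      invFun := Binv T
      left_inv := Binv_Bfwd hT
      right_inv := Bfwd_Binv hT }
  norm_map' := fun x => norm_eq_of_inner_self_eq (Bfwd_inner_self hT x)

/-- the Sz.-Nagy unitary dilation on `ℓ²(ℤ, H)` -/
def UIso (hT : ‖T‖ ≤ 1) : K₀ ≃ₗᵢ[ℂ] K₀ := (BIso hT).trans shiftIso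

lemma UIso_coord (hT : ‖T‖ ≤ 1) (x : K₀) (n : ℤ) :
    (UIso hT x : ∀ _ : ℤ, H) n = (Bfwd T x : ∀ _ : ℤ, H) (n - 1) := rfl

lemma UIso_preserve (hT : ‖T‖ ≤ 1) {x : K₀} (hx : ∀ m : ℤ, m < 0 → x m = 0) :
    (∀ m : ℤ, m < 0 → (UIso hT x : ∀ _ : ℤ, H) m = 0)
      ∧ (UIso hT x : ∀ _ : ℤ, H) 0 = T (x 0) := by
  constructor
  · intro m hm
    rw [UIso_coord, Bfwd_coord_other T x (by omega) (by omega)]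
    exact hx (m - 1) (by omega)
  · rw [UIso_coord, show (0 : ℤ) - 1 = -1 by decide, Bfwd_coord_neg_one,
      hx (-1) (by decide), map_zero, zero_add]

/-- the canonical inclusion of `H` at coordinate `0` -/
def J0 : H →ₗᵢ[ℂ] K₀ where
  toLinearMap := (sing 0).toLinearMap
  norm_map' := fun h => norm_single 0 h

@[simp] lemma J0_apply (h : H) : (J0 h : K₀) = lp.single 2 0 h := rfl

lemma J0_coord_self (h : H) : (J0 h : ∀ _ : ℤ, H) 0 = h := lp.single_apply_self _ _ _

lemma J0_coord_ne (h : H) {m : ℤ} (hm : m ≠ 0) : (J0 h : ∀ _ : ℤ, H) m = 0 :=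
  lp.single_apply_ne _ _ _ hm

end Unitary

/-! ### the minimal dilation space -/

section Minimal
set_option linter.unusedSectionVars false
variable {H : Type u} [NormedAddCommGroup H] [InnerProductSpace ℂ H] [CompleteSpace H]

local notation "K₀" => lp (fun _ : ℤ => H) 2

lemma equiv_pow_succ_apply (e : K₀ ≃ₗᵢ[ℂ] K₀) (n : ℕ) (x : K₀) :
    (e ^ (n + 1)) x = e ((e ^ n) x) := by
  rw [pow_succ']
  exact congrFun (LinearIsometryEquiv.coe_mul e (e ^ n)) x

lemma equiv_pow_zero_apply (e : K₀ ≃ₗᵢ[ℂ] K₀) (x : K₀) : (e ^ 0) x = x := by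
  rw [pow_zero]; rfl

variable {T : H →L[ℂ] H}

/-- the generating set of the minimal dilation space -/
def SS (hT : ‖T‖ ≤ 1) : Set K₀ :=
  {x | ∃ (m k : ℕ) (h : H), (UIso hT ^ m) (((UIso hT).symm ^ k) (J0 h)) = x}

lemma SS_mapsTo_U (hT : ‖T‖ ≤ 1) : ∀ x ∈ SS hT, UIso hT x ∈ SS hT := by
  rintro x ⟨m, k, h, rfl⟩
  exact ⟨m + 1, k, h, equiv_pow_succ_apply _ m _⟩

lemma SS_mapsTo_Usymm (hT : ‖T‖ ≤ 1) : ∀ x ∈ SS hT, (UIso hT).symm x ∈ SS hT := by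
  rintro x ⟨m, k, h, rfl⟩
  cases m with
  | zero =>
    refine ⟨0, k + 1, h, ?_⟩
    rw [equiv_pow_zero_apply, equiv_pow_zero_apply, equiv_pow_succ_apply]
  | succ m =>
    refine ⟨m, k, h, ?_⟩
    rw [equiv_pow_succ_apply]
    exact ((UIso hT).symm_apply_apply _).symm

/-- the minimal dilation space, as a closed submodule of `ℓ²(ℤ, H)` -/
def Ksub (hT : ‖T‖ ≤ 1) : Submodule ℂ K₀ :=
  (Submodule.span ℂ (SS hT)).topologicalClosure

lemma mem_Ksub_of_mem_SS (hT : ‖T‖ ≤ 1) {x : K₀} (hx : x ∈ SS hT) : x ∈ Ksub hT :=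
  Submodule.le_topologicalClosure _ (Submodule.subset_span hx)

lemma J0_mem_SS (hT : ‖T‖ ≤ 1) (h : H) : (J0 h : K₀) ∈ SS hT :=
  ⟨0, 0, h, by rw [equiv_pow_zero_apply, equiv_pow_zero_apply]⟩

/-- membership is stable under the unitary -/
lemma Umem (hT : ‖T‖ ≤ 1) {x : K₀} (hx : x ∈ Ksub hT) : UIso hT x ∈ Ksub hT := by
  set Φ : K₀ →L[ℂ] K₀ := (UIso hT).toLinearIsometry.toContinuousLinearMap with hΦ
  have hmap : (Submodule.span ℂ (SS hT)).map (Φ : K₀ →ₗ[ℂ] K₀) ≤ Submodule.span ℂ (SS hT) := by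
    rw [Submodule.map_span]
    refine Submodule.span_mono ?_
    rintro y ⟨z, hz, rfl⟩
    exact SS_mapsTo_U hT z hz
  have h1 := Submodule.topologicalClosure_map Φ (Submodule.span ℂ (SS hT))
  have h2 : (Ksub hT).map (Φ : K₀ →ₗ[ℂ] K₀) ≤ Ksub hT :=
    h1.trans (Submodule.topologicalClosure_mono hmap)
  exact h2 (Submodule.mem_map_of_mem hx)

lemma Usymm_mem (hT : ‖T‖ ≤ 1) {x : K₀} (hx : x ∈ Ksub hT) : (UIso hT).symm x ∈ Ksub hT := by
  set Φ : K₀ →L[ℂ] K₀ := (UIso hT).symm.toLinearIsometry.toContinuousLinearMap with hΦ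
  have hmap : (Submodule.span ℂ (SS hT)).map (Φ : K₀ →ₗ[ℂ] K₀) ≤ Submodule.span ℂ (SS hT) := by
    rw [Submodule.map_span]
    refine Submodule.span_mono ?_
    rintro y ⟨z, hz, rfl⟩
    exact SS_mapsTo_Usymm hT z hz
  have h1 := Submodule.topologicalClosure_map Φ (Submodule.span ℂ (SS hT))
  have h2 : (Ksub hT).map (Φ : K₀ →ₗ[ℂ] K₀) ≤ Ksub hT :=
    h1.trans (Submodule.topologicalClosure_mono hmap)
  exact h2 (Submodule.mem_map_of_mem hx)

/-- the embedding of `H` into the minimal dilation space -/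
def Jsub (hT : ‖T‖ ≤ 1) : H →ₗᵢ[ℂ] ↥(Ksub hT) where
  toLinearMap := (J0.toLinearMap).codRestrict (Ksub hT)
    (fun h => mem_Ksub_of_mem_SS hT (J0_mem_SS hT h))
  norm_map' := fun h => J0.norm_map h

@[simp] lemma Jsub_coe (hT : ‖T‖ ≤ 1) (h : H) : ((Jsub hT h : ↥(Ksub hT)) : K₀) = J0 h := rfl

/-- the restricted unitary -/
def Usub (hT : ‖T‖ ≤ 1) : ↥(Ksub hT) →L[ℂ] ↥(Ksub hT) :=
  ContinuousLinearMap.codRestrict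
    ((UIso hT).toLinearIsometry.toContinuousLinearMap ∘L (Ksub hT).subtypeL)
    (Ksub hT) (fun x => Umem hT x.2)

/-- the restricted inverse unitary -/
def Vsub (hT : ‖T‖ ≤ 1) : ↥(Ksub hT) →L[ℂ] ↥(Ksub hT) :=
  ContinuousLinearMap.codRestrict
    ((UIso hT).symm.toLinearIsometry.toContinuousLinearMap ∘L (Ksub hT).subtypeL)
    (Ksub hT) (fun x => Usymm_mem hT x.2)

@[simp] lemma Usub_coe (hT : ‖T‖ ≤ 1) (x : ↥(Ksub hT)) :
    ((Usub hT x : ↥(Ksub hT)) : K₀) = UIso hT (x : K₀) := rfl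

@[simp] lemma Vsub_coe (hT : ‖T‖ ≤ 1) (x : ↥(Ksub hT)) :
    ((Vsub hT x : ↥(Ksub hT)) : K₀) = (UIso hT).symm (x : K₀) := rfl

lemma Usub_pow_coe (hT : ‖T‖ ≤ 1) (n : ℕ) (x : ↥(Ksub hT)) :
    (((Usub hT ^ n) x : ↥(Ksub hT)) : K₀) = (UIso hT ^ n) (x : K₀) := by
  induction n with
  | zero => rw [pow_zero, equiv_pow_zero_apply]; rfl
  | succ n ih =>
    rw [pow_succ', ContinuousLinearMap.mul_apply, equiv_pow_succ_apply, Usub_coe, ih]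

lemma Vsub_pow_coe (hT : ‖T‖ ≤ 1) (k : ℕ) (x : ↥(Ksub hT)) :
    (((Vsub hT ^ k) x : ↥(Ksub hT)) : K₀) = ((UIso hT).symm ^ k) (x : K₀) := by
  induction k with
  | zero => rw [pow_zero, equiv_pow_zero_apply]; rfl
  | succ k ih =>
    rw [pow_succ', ContinuousLinearMap.mul_apply, equiv_pow_succ_apply, Vsub_coe, ih]

end Minimal

/-! ### assembly -/

section Assembly
set_option linter.unusedSectionVars false
variable {H : Type u} [NormedAddCommGroup H] [InnerProductSpace ℂ H] [CompleteSpace H]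
variable {T : H →L[ℂ] H}

local notation "K₀" => lp (fun _ : ℤ => H) 2

instance KsubComplete (hT : ‖T‖ ≤ 1) : CompleteSpace ↥(Ksub hT) :=
  (Submodule.isClosed_topologicalClosure _).completeSpace_coe

lemma adjoint_Usub (hT : ‖T‖ ≤ 1) : adjoint (Usub hT) = Vsub hT := by
  refine ((ContinuousLinearMap.eq_adjoint_iff (Vsub hT) (Usub hT)).mpr fun x y => ?_).symm
  rw [Submodule.coe_inner, Submodule.coe_inner, Vsub_coe, Usub_coe]
  conv_lhs => rw [← (UIso hT).inner_map_map ((UIso hT).symm (x : K₀)) (y : K₀),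
    (UIso hT).apply_symm_apply]

lemma adj_mul_U (hT : ‖T‖ ≤ 1) : adjoint (Usub hT) ∘L Usub hT = 1 := by
  rw [adjoint_Usub]
  refine ContinuousLinearMap.ext fun x => Subtype.ext ?_
  show (((Vsub hT) ((Usub hT) x) : ↥(Ksub hT)) : K₀) = ((x : ↥(Ksub hT)) : K₀)
  rw [Vsub_coe, Usub_coe, (UIso hT).symm_apply_apply]

lemma U_mul_adj (hT : ‖T‖ ≤ 1) : Usub hT ∘L adjoint (Usub hT) = 1 := by
  rw [adjoint_Usub]
  refine ContinuousLinearMap.ext fun x => Subtype.ext ?_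
  show (((Usub hT) ((Vsub hT) x) : ↥(Ksub hT)) : K₀) = ((x : ↥(Ksub hT)) : K₀)
  rw [Usub_coe, Vsub_coe, (UIso hT).apply_symm_apply]

lemma dilation_coord (hT : ‖T‖ ≤ 1) (h : H) : ∀ n : ℕ,
    (∀ m : ℤ, m < 0 → (((UIso hT ^ n) (J0 h) : K₀) : ∀ _ : ℤ, H) m = 0)
      ∧ (((UIso hT ^ n) (J0 h) : K₀) : ∀ _ : ℤ, H) 0 = (T ^ n) h := by
  intro n
  induction n with
  | zero =>
    rw [equiv_pow_zero_apply]
    exact ⟨fun m hm => J0_coord_ne h (by omega), by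
      rw [J0_coord_self, pow_zero, ContinuousLinearMap.one_apply]⟩
  | succ n ih =>
    rw [equiv_pow_succ_apply]
    obtain ⟨h1, h2⟩ := UIso_preserve hT (x := (UIso hT ^ n) (J0 h)) ih.1
    refine ⟨h1, ?_⟩
    rw [h2, ih.2, pow_succ', ContinuousLinearMap.mul_apply]

lemma dilation (hT : ‖T‖ ≤ 1) (n : ℕ) :
    (T ^ n) = adjoint ((Jsub hT).toContinuousLinearMap) ∘L ((Usub hT) ^ n)
      ∘L (Jsub hT).toContinuousLinearMap := by
  refine ContinuousLinearMap.ext fun h => ?_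
  rw [ContinuousLinearMap.comp_apply, ContinuousLinearMap.comp_apply]
  refine (ext_inner_right ℂ fun v => ?_).symm
  rw [adjoint_inner_left]
  show ⟪(((Usub hT ^ n) ((Jsub hT).toContinuousLinearMap h) : ↥(Ksub hT)) : K₀),
      ((Jsub hT v : ↥(Ksub hT)) : K₀)⟫_ℂ = ⟪(T ^ n) h, v⟫_ℂ
  rw [Usub_pow_coe]
  have hc : (((Jsub hT).toContinuousLinearMap h : ↥(Ksub hT)) : K₀) = J0 h := rfl
  have hc2 : ((Jsub hT v : ↥(Ksub hT)) : K₀) = lp.single 2 0 v := rfl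
  rw [hc, hc2, lp.inner_single_right, (dilation_coord hT h n).2]

lemma minimal (hT : ‖T‖ ≤ 1) :
    (Submodule.span ℂ {x : ↥(Ksub hT) | ∃ (m k : ℕ) (h : H),
      ((Usub hT) ^ m) (((Vsub hT) ^ k) (Jsub hT h)) = x}).topologicalClosure = ⊤ := by
  set St : Set ↥(Ksub hT) := {x | ∃ (m k : ℕ) (h : H),
    ((Usub hT) ^ m) (((Vsub hT) ^ k) (Jsub hT h)) = x} with hSt
  have hval : Subtype.val '' St = SS hT := by
    apply Set.Subset.antisymm
    · rintro _ ⟨x, ⟨m, k, h, rfl⟩, rfl⟩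
      refine ⟨m, k, h, ?_⟩
      rw [Usub_pow_coe, Vsub_pow_coe, Jsub_coe]
    · rintro y ⟨m, k, h, rfl⟩
      refine ⟨(Usub hT ^ m) ((Vsub hT ^ k) (Jsub hT h)), ⟨m, k, h, rfl⟩, ?_⟩
      rw [Usub_pow_coe, Vsub_pow_coe, Jsub_coe]
  have hcl : Topology.IsClosedEmbedding ((↑) : ↥(Ksub hT) → K₀) :=
    (Submodule.isClosed_topologicalClosure _).isClosedEmbedding_subtypeVal
  have him : Subtype.val '' (Submodule.span ℂ St : Set ↥(Ksub hT))
      = (Submodule.span ℂ (SS hT) : Set K₀) := by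
    have h1 := Submodule.map_span ((Ksub hT).subtype) St
    have h2 := congrArg (fun p : Submodule ℂ K₀ => (p : Set K₀)) h1
    simp only [Submodule.map_coe] at h2
    rw [show ⇑(Ksub hT).subtype = (Subtype.val : ↥(Ksub hT) → K₀) from rfl] at h2
    rw [h2, hval]
  have h3 : Subtype.val '' closure (Submodule.span ℂ St : Set ↥(Ksub hT))
      = (Ksub hT : Set K₀) := by
    rw [← hcl.closure_image_eq, him]
    rfl
  rw [Submodule.eq_top_iff']
  intro x
  have hx : (x : K₀) ∈ Subtype.val '' closure (Submodule.span ℂ St : Set ↥(Ksub hT)) := by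
    rw [h3]; exact x.2
  obtain ⟨y, hy, hyx⟩ := hx
  have : y = x := Subtype.val_injective hyx
  rw [← this]
  exact hy

end Assembly
end SzNagyProof

/-- **Application 2: the Sz.-Nagy minimal unitary dilation of a contraction.**  Every
contraction `T` on a Hilbert space `H` has a minimal unitary dilation `U` on a larger
Hilbert space `K`: `Tⁿ = J† ∘ Uⁿ ∘ J` for all `n`, with `K` spanned by the vectors
`Uᵐ (U†)ᵏ (J h)`. -/
theorem szNagy_unitary_dilation
    {H : Type u} [NormedAddCommGroup H] [InnerProductSpace ℂ H] [CompleteSpace H]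
    (T : H →L[ℂ] H) (hT : ‖T‖ ≤ 1) :
    ∃ (K : Type u) (_ : NormedAddCommGroup K) (_ : InnerProductSpace ℂ K)
      (_ : CompleteSpace K) (J : H →ₗᵢ[ℂ] K) (U : K →L[ℂ] K),
      adjoint U ∘L U = 1 ∧ U ∘L adjoint U = 1 ∧
      (∀ n : ℕ, T ^ n =
        adjoint J.toContinuousLinearMap ∘L (U ^ n) ∘L J.toContinuousLinearMap) ∧
      (Submodule.span ℂ
          {x : K | ∃ (m k : ℕ) (h : H),
            (U ^ m) (((adjoint U) ^ k) (J h)) = x}).topologicalClosure = ⊤ := by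
  refine ⟨↥(SzNagyProof.Ksub hT), inferInstance, inferInstance, inferInstance,
    SzNagyProof.Jsub hT, SzNagyProof.Usub hT,
    SzNagyProof.adj_mul_U hT, SzNagyProof.U_mul_adj hT,
    fun n => SzNagyProof.dilation hT n, ?_⟩
  simp only [SzNagyProof.adjoint_Usub hT]
  exact SzNagyProof.minimal hT

end
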